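/- Let r ≥ k ≥ 5 be integers, let H be an n-vertex connected BP_k-free r-uniform hypergraph, let t be the maximum length of a Berge path in H, and suppose H contains a Berge cycle of length t. Then the number of hyperedges of H satisfies e(H) ≤ max{t+1, t + (n−t)/(r−⌊t/2⌋)}, where the second term is a rational number. -/

import Mathlib

namespace Berge

def IsBergePath {n : ℕ} (E : Finset (Finset (Fin n))) (k : ℕ)
    (v : Fin (k + 1) → Fin n) (f : Fin k → Finset (Fin n)) : Prop :=
  Function.Injective v ∧ Function.Injective f ∧ (∀ i, f i ∈ E) ∧
    ∀ i : Fin k, v i.castSucc ∈ f i ∧ v i.succ ∈ f i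

def HasBergePath {n : ℕ} (E : Finset (Finset (Fin n))) (k : ℕ) : Prop :=
  ∃ v f, IsBergePath E k v f

def BPFree {n : ℕ} (E : Finset (Finset (Fin n))) (k : ℕ) : Prop :=
  ¬ HasBergePath E k

def Connected {n : ℕ} (E : Finset (Finset (Fin n))) : Prop :=
  ∀ x y : Fin n, ∃ (k : ℕ) (v : Fin (k + 1) → Fin n) (f : Fin k → Finset (Fin n)),
    IsBergePath E k v f ∧ (∃ i, v i = x) ∧ (∃ i, v i = y)

def Uniform {n : ℕ} (E : Finset (Finset (Fin n))) (r : ℕ) : Prop :=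
  ∀ e ∈ E, e.card = r

noncomputable def exConn (n r k : ℕ) : ℕ :=
  sSup {m | ∃ E : Finset (Finset (Fin n)),
    Uniform E r ∧ Connected E ∧ BPFree E k ∧ E.card = m}

def IsBergeCycle {n : ℕ} (E : Finset (Finset (Fin n))) (k : ℕ)
    (v : Fin k → Fin n) (f : Fin k → Finset (Fin n)) : Prop :=
  Function.Injective v ∧ Function.Injective f ∧ (∀ i, f i ∈ E) ∧
    ∀ i : Fin k, v i ∈ f i ∧ v ⟨(i.val + 1) % k, Nat.mod_lt _ i.pos⟩ ∈ f i


lemma mod_window_inj {t j d d' : ℕ} (h1 : d' - d < t) (h2 : d - d' < t)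
    (h : (j + d) % t = (j + d') % t) : d = d' := by
  have hm : Nat.ModEq t (j + d) (j + d') := h
  have hm2 : Nat.ModEq t d d' := Nat.ModEq.add_left_cancel' j hm
  rcases le_total d d' with hle | hle
  · have hdvd : t ∣ d' - d := (Nat.modEq_iff_dvd' hle).mp hm2
    have := Nat.eq_zero_of_dvd_of_lt hdvd h1
    omega
  · have hdvd : t ∣ d - d' := (Nat.modEq_iff_dvd' hle).mp hm2.symm
    have := Nat.eq_zero_of_dvd_of_lt hdvd h2
    omega

lemma mod_succ (t j c : ℕ) : ((j + c) % t + 1) % t = (j + c + 1) % t :=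
  ((Nat.mod_modEq (j + c) t).add_right 1 : _)

lemma claim1 {n t : ℕ} (ht0 : 0 < t) {E : Finset (Finset (Fin n))}
    {v : Fin t → Fin n} {f : Fin t → Finset (Fin n)}
    (hC : IsBergeCycle E t v f) {g : Finset (Fin n)} (hg : g ∈ E)
    (hgne : ∀ i, g ≠ f i) (j : Fin t) (hj : v j ∈ g)
    {x y : Fin n} (hxg : x ∈ g) (hxW : ∀ i, x ≠ v i)
    (hy : y ∈ f ⟨(j.val + (t - 1)) % t, Nat.mod_lt _ ht0⟩) (hyW : ∀ i, y ≠ v i)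
    (hxy : x ≠ y) : HasBergePath E (t + 1) := by
  obtain ⟨hvi, hfi, hfE, hstep⟩ := hC
  refine ⟨fun i => if i.val = 0 then x else if i.val = t + 1 then y else
      v ⟨(j.val + i.val - 1) % t, Nat.mod_lt _ ht0⟩,
    fun i => if i.val = 0 then g else f ⟨(j.val + i.val - 1) % t, Nat.mod_lt _ ht0⟩,
    ?_, ?_, ?_, ?_⟩
  · -- injectivity of vertex map
    intro i1 i2 h
    obtain ⟨a, ha⟩ := i1; obtain ⟨b, hb⟩ := i2
    dsimp only at h
    simp only [Fin.mk.injEq]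
    have cls : ∀ c : ℕ, c < t + 2 → c = 0 ∨ (1 ≤ c ∧ c ≤ t) ∨ c = t + 1 := by omega
    rcases cls a ha with h1 | h1 | h1 <;> rcases cls b hb with h2 | h2 | h2
    · omega
    · rw [if_pos h1, if_neg (by omega), if_neg (by omega)] at h
      exact absurd h (hxW _)
    · rw [if_pos h1, if_neg (by omega), if_pos h2] at h
      exact absurd h hxy
    · rw [if_pos h2, if_neg (by omega), if_neg (by omega)] at h
      exact absurd h.symm (hxW _)
    · rw [if_neg (by omega), if_neg (by omega), if_neg (by omega), if_neg (by omega)] at h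
      have hval : (j.val + a - 1) % t = (j.val + b - 1) % t := congrArg Fin.val (hvi h)
      have e1 : j.val + a - 1 = j.val + (a - 1) := by omega
      have e2 : j.val + b - 1 = j.val + (b - 1) := by omega
      rw [e1, e2] at hval
      have := mod_window_inj (t := t) (by omega) (by omega) hval
      omega
    · rw [if_neg (by omega), if_neg (by omega), if_neg (by omega), if_pos h2] at h
      exact absurd h.symm (hyW _)
    · rw [if_pos h2, if_neg (by omega), if_pos h1] at h
      exact absurd h.symm hxy
    · rw [if_neg (by omega), if_pos h1, if_neg (by omega), if_neg (by omega)] at h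
      exact absurd h (hyW _)
    · omega
  · -- injectivity of edge map
    intro i1 i2 h
    obtain ⟨a, ha⟩ := i1; obtain ⟨b, hb⟩ := i2
    dsimp only at h
    simp only [Fin.mk.injEq]
    have cls : ∀ c : ℕ, c < t + 1 → c = 0 ∨ (1 ≤ c ∧ c ≤ t) := by omega
    rcases cls a ha with h1 | h1 <;> rcases cls b hb with h2 | h2
    · omega
    · rw [if_pos h1, if_neg (by omega)] at h
      exact absurd h (hgne _)
    · rw [if_pos h2, if_neg (by omega)] at h
      exact absurd h.symm (hgne _)
    · rw [if_neg (by omega), if_neg (by omega)] at h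
      have hval : (j.val + a - 1) % t = (j.val + b - 1) % t := congrArg Fin.val (hfi h)
      have e1 : j.val + a - 1 = j.val + (a - 1) := by omega
      have e2 : j.val + b - 1 = j.val + (b - 1) := by omega
      rw [e1, e2] at hval
      have := mod_window_inj (t := t) (by omega) (by omega) hval
      omega
  · -- edges in E
    intro i
    dsimp only
    split
    · exact hg
    · exact hfE _
  · -- step conditions
    intro s
    obtain ⟨c, hcs⟩ := s
    dsimp only [Fin.castSucc, Fin.castAdd, Fin.castLE, Fin.succ]
    constructor
    · -- first vertex of step c
      by_cases hc0 : c = 0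
      · simp only [if_pos hc0]
        exact hxg
      · simp only [if_neg hc0, if_neg (show ¬(c = t + 1) by omega)]
        exact (hstep _).1
    · -- second vertex of step c
      by_cases hc0 : c = 0
      · simp only [if_neg (show ¬(c + 1 = 0) by omega), if_neg (show ¬(c + 1 = t + 1) by omega),
          if_pos hc0]
        have h2 : v j ∈ g := hj
        convert h2 using 2
        apply Fin.ext
        simp only [hc0]
        simpa using Nat.mod_eq_of_lt j.isLt
      · by_cases hct : c + 1 = t + 1
        · simp only [if_neg (show ¬(c + 1 = 0) by omega), if_pos hct, if_neg hc0]
          convert hy using 2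
          apply Fin.ext
          simp only
          congr 1
          omega
        · simp only [if_neg (show ¬(c + 1 = 0) by omega), if_neg hct, if_neg hc0]
          have h2 := (hstep ⟨(j.val + c - 1) % t, Nat.mod_lt _ ht0⟩).2
          convert h2 using 2
          apply Fin.ext
          simp only
          have e1 : j.val + c - 1 = j.val + (c - 1) := by omega
          have e2 : j.val + (c - 1) + 1 = j.val + (c + 1) - 1 := by omega
          rw [e1, mod_succ, e2]


lemma claim2 {n t : ℕ} (ht0 : 0 < t) {E : Finset (Finset (Fin n))}
    {v : Fin t → Fin n} {f : Fin t → Finset (Fin n)}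
    (hC : IsBergeCycle E t v f) {g : Finset (Fin n)} (hg : g ∈ E)
    (hgne : ∀ i, g ≠ f i) (j : Fin t) {u y : Fin n}
    (hug : u ∈ g) (huf : u ∈ f j) (huW : ∀ i, u ≠ v i)
    (hyg : y ∈ g) (hyW : ∀ i, y ≠ v i) (hyu : y ≠ u) : HasBergePath E (t + 1) := by
  obtain ⟨hvi, hfi, hfE, hstep⟩ := hC
  refine ⟨fun i => if i.val = 0 then y else if i.val = 1 then u else
      v ⟨(j.val + i.val - 1) % t, Nat.mod_lt _ ht0⟩,
    fun i => if i.val = 0 then g else f ⟨(j.val + i.val - 1) % t, Nat.mod_lt _ ht0⟩,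
    ?_, ?_, ?_, ?_⟩
  · -- injectivity of vertex map
    intro i1 i2 h
    obtain ⟨a, ha⟩ := i1; obtain ⟨b, hb⟩ := i2
    dsimp only at h
    simp only [Fin.mk.injEq]
    have cls : ∀ c : ℕ, c < t + 2 → c = 0 ∨ c = 1 ∨ (2 ≤ c ∧ c ≤ t + 1) := by omega
    rcases cls a ha with h1 | h1 | h1 <;> rcases cls b hb with h2 | h2 | h2
    · omega
    · rw [if_pos h1, if_neg (by omega), if_pos h2] at h
      exact absurd h hyu
    · rw [if_pos h1, if_neg (by omega), if_neg (by omega)] at h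
      exact absurd h (hyW _)
    · rw [if_pos h2, if_neg (by omega), if_pos h1] at h
      exact absurd h.symm hyu
    · omega
    · rw [if_neg (by omega), if_pos h1, if_neg (by omega), if_neg (by omega)] at h
      exact absurd h (huW _)
    · rw [if_pos h2, if_neg (by omega), if_neg (by omega)] at h
      exact absurd h.symm (hyW _)
    · rw [if_neg (by omega), if_pos h2, if_neg (by omega), if_neg (by omega)] at h
      exact absurd h.symm (huW _)
    · rw [if_neg (by omega), if_neg (by omega), if_neg (by omega), if_neg (by omega)] at h
      have hval : (j.val + a - 1) % t = (j.val + b - 1) % t := congrArg Fin.val (hvi h)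
      have e1 : j.val + a - 1 = j.val + (a - 1) := by omega
      have e2 : j.val + b - 1 = j.val + (b - 1) := by omega
      rw [e1, e2] at hval
      have := mod_window_inj (t := t) (by omega) (by omega) hval
      omega
  · -- injectivity of edge map
    intro i1 i2 h
    obtain ⟨a, ha⟩ := i1; obtain ⟨b, hb⟩ := i2
    dsimp only at h
    simp only [Fin.mk.injEq]
    have cls : ∀ c : ℕ, c < t + 1 → c = 0 ∨ (1 ≤ c ∧ c ≤ t) := by omega
    rcases cls a ha with h1 | h1 <;> rcases cls b hb with h2 | h2
    · omega
    · rw [if_pos h1, if_neg (by omega)] at h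
      exact absurd h (hgne _)
    · rw [if_pos h2, if_neg (by omega)] at h
      exact absurd h.symm (hgne _)
    · rw [if_neg (by omega), if_neg (by omega)] at h
      have hval : (j.val + a - 1) % t = (j.val + b - 1) % t := congrArg Fin.val (hfi h)
      have e1 : j.val + a - 1 = j.val + (a - 1) := by omega
      have e2 : j.val + b - 1 = j.val + (b - 1) := by omega
      rw [e1, e2] at hval
      have := mod_window_inj (t := t) (by omega) (by omega) hval
      omega
  · -- edges in E
    intro i
    dsimp only
    split
    · exact hg
    · exact hfE _
  · -- step conditions
    intro s
    obtain ⟨c, hcs⟩ := s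
    dsimp only [Fin.castSucc, Fin.castAdd, Fin.castLE, Fin.succ]
    constructor
    · -- first vertex of step c
      by_cases hc0 : c = 0
      · simp only [if_pos hc0]
        exact hyg
      · by_cases hc1 : c = 1
        · simp only [if_neg hc0, if_pos hc1]
          convert huf using 2
          apply Fin.ext
          simp only [hc1]
          simpa using Nat.mod_eq_of_lt j.isLt
        · simp only [if_neg hc0, if_neg hc1]
          exact (hstep _).1
    · -- second vertex of step c
      by_cases hc0 : c = 0
      · simp only [if_neg (show ¬(c + 1 = 0) by omega), if_pos (show c + 1 = 1 by omega),
          if_pos hc0]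
        exact hug
      · simp only [if_neg (show ¬(c + 1 = 0) by omega), if_neg (show ¬(c + 1 = 1) by omega),
          if_neg hc0]
        have h2 := (hstep ⟨(j.val + c - 1) % t, Nat.mod_lt _ ht0⟩).2
        convert h2 using 2
        apply Fin.ext
        simp only
        have e1 : j.val + c - 1 = j.val + (c - 1) := by omega
        have e2 : j.val + (c - 1) + 1 = j.val + (c + 1) - 1 := by omega
        rw [e1, mod_succ, e2]


lemma hasBergePath_mono {n : ℕ} {E : Finset (Finset (Fin n))} {s : ℕ}
    (h : HasBergePath E s) {k : ℕ} (hks : k ≤ s) : HasBergePath E k := by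
  obtain ⟨v, f, hv, hf, hfe, hstep⟩ := h
  refine ⟨v ∘ Fin.castLE (by omega), f ∘ Fin.castLE hks,
    hv.comp (Fin.castLE_injective _), hf.comp (Fin.castLE_injective _),
    fun i => hfe _, fun i => ?_⟩
  have := hstep (Fin.castLE hks i)
  constructor
  · convert this.1 using 2 <;> rfl
  · convert this.2 using 2 <;> rfl

theorem stmt18' (n r k t : ℕ) (hk : 5 ≤ k) (hrk : k ≤ r)
    (E : Finset (Finset (Fin n))) (hu : ∀ e ∈ E, e.card = r)
    (hc : ∀ x y : Fin n, ∃ (m : ℕ) (v : Fin (m + 1) → Fin n) (f : Fin m → Finset (Fin n)),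
      IsBergePath E m v f ∧ (∃ i, v i = x) ∧ (∃ i, v i = y))
    (hf : ¬ HasBergePath E k)
    (ht : HasBergePath E t) (hmax : ∀ s : ℕ, HasBergePath E s → s ≤ t)
    (hcyc : ∃ (v : Fin t → Fin n) (f : Fin t → Finset (Fin n)), IsBergeCycle E t v f) :
    E.card ≤ t + 1 := by
  have htk : t < k := by
    by_contra hle
    push_neg at hle
    exact hf (hasBergePath_mono ht hle)
  rcases Nat.eq_zero_or_pos t with ht0 | ht0
  · -- t = 0 : E is empty
    have hE : E = ∅ := by
      by_contra hne
      obtain ⟨g, hg⟩ := Finset.nonempty_iff_ne_empty.mpr hne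
      have hcard : 1 < g.card := by rw [hu g hg]; omega
      obtain ⟨a, hag, b, hbg, hab⟩ := Finset.one_lt_card.mp hcard
      have hp1 : HasBergePath E 1 := by
        refine ⟨![a, b], fun _ => g, ?_, ?_, fun _ => hg, ?_⟩
        · intro i1 i2 h
          fin_cases i1 <;> fin_cases i2 <;> simp_all
        · intro i1 i2 _
          exact Subsingleton.elim _ _
        · intro i
          fin_cases i
          exact ⟨by simpa using hag, by simpa using hbg⟩
      have := hmax 1 hp1
      omega
    rw [hE]
    simp
  · -- t ≥ 1
    obtain ⟨v, f, hC⟩ := hcyc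
    obtain ⟨hvi, hfi, hfE, hstep⟩ := hC
    have hC' : IsBergeCycle E t v f := ⟨hvi, hfi, hfE, hstep⟩
    have hrt : t + 1 ≤ r := by omega
    set W := Finset.image v Finset.univ with hW
    have hWcard : W.card ≤ t := le_trans Finset.card_image_le (by simp)
    have hWmem : ∀ {z : Fin n}, z ∉ W → ∀ i, z ≠ v i := by
      intro z hz i he
      exact hz (Finset.mem_image.mpr ⟨i, Finset.mem_univ _, he.symm⟩)
    have hlong : ¬ HasBergePath E (t + 1) := fun h => by have := hmax _ h; omega
    -- no non-cycle edge meets the cycle vertices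
    have hA : ∀ g ∈ E, (∀ i, g ≠ f i) → ∀ i, v i ∉ g := by
      intro g hg hgne
      by_contra hcon
      push_neg at hcon
      obtain ⟨j, hj⟩ := hcon
      have hgcard : g.card = r := hu g hg
      set j' : Fin t := ⟨(j.val + (t - 1)) % t, Nat.mod_lt _ ht0⟩ with hj'
      have hfcard : (f j').card = r := hu _ (hfE j')
      have hAne : ∃ x ∈ g, x ∉ W := by
        by_contra hsub
        push_neg at hsub
        have := Finset.card_le_card hsub
        omega
      have hBne : ∃ y ∈ f j', y ∉ W := by
        by_contra hsub
        push_neg at hsub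
        have := Finset.card_le_card hsub
        omega
      by_cases hex : ∃ x ∈ g, x ∉ W ∧ ∃ y ∈ f j', y ∉ W ∧ x ≠ y
      · obtain ⟨x, hxg, hxW, y, hyf, hyW, hxy⟩ := hex
        exact hlong (claim1 ht0 hC' hg hgne j hj hxg (hWmem hxW) hyf (hWmem hyW) hxy)
      · push_neg at hex
        obtain ⟨c, hcg, hcW⟩ := hAne
        obtain ⟨c', hcf, hcW'⟩ := hBne
        have hcc : c = c' := hex c hcg hcW c' hcf hcW'
        subst hcc
        have hgsub : g ⊆ W ∪ {c} := by
          intro z hz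
          by_cases hzW : z ∈ W
          · exact Finset.mem_union_left _ hzW
          · have : z = c := hex z hz hzW c hcf hcW'
            exact Finset.mem_union_right _ (by simp [this])
        have hfsub : f j' ⊆ W ∪ {c} := by
          intro z hz
          by_cases hzW : z ∈ W
          · exact Finset.mem_union_left _ hzW
          · have : c = z := hex c hcg hcW z hz hzW
            exact Finset.mem_union_right _ (by simp [this.symm])
        have hucard : (W ∪ {c}).card ≤ t + 1 :=
          le_trans (Finset.card_union_le _ _) (by simp; omega)
        have hge : g = W ∪ {c} :=
          Finset.eq_of_subset_of_card_le hgsub (by omega)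
        have hfe2 : f j' = W ∪ {c} :=
          Finset.eq_of_subset_of_card_le hfsub (by omega)
        exact hgne j' (hge.trans hfe2.symm)
    -- non-cycle edges are disjoint from all cycle edges
    have hB : ∀ g ∈ E, (∀ i, g ≠ f i) → ∀ (i : Fin t), ∀ z ∈ g, z ∉ f i := by
      intro g hg hgne i z hzg hzf
      have hzW : ∀ i', z ≠ v i' := fun i' he => hA g hg hgne i' (he ▸ hzg)
      have hgcard2 : 1 < g.card := by rw [hu g hg]; omega
      obtain ⟨y, hyg, hyz⟩ := Finset.exists_mem_ne hgcard2 z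
      have hyW : ∀ i', y ≠ v i' := fun i' he => hA g hg hgne i' (he ▸ hyg)
      exact hlong (claim2 ht0 hC' hg hgne i hzg hzf hzW hyg hyW hyz)
    -- connectivity forces every edge to be a cycle edge
    have hall : ∀ g ∈ E, ∃ i, g = f i := by
      intro g hg
      by_contra hgne
      push_neg at hgne
      have hgpos : 0 < g.card := by rw [hu g hg]; omega
      obtain ⟨x, hx⟩ := Finset.card_pos.mp hgpos
      set S : Finset (Fin n) := Finset.univ.biUnion f with hS
      have hxS : x ∉ S := by
        intro hxs
        rw [hS, Finset.mem_biUnion] at hxs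
        obtain ⟨i, _, hxi⟩ := hxs
        exact hB g hg hgne i x hx hxi
      have hv0S : v ⟨0, ht0⟩ ∈ S :=
        Finset.mem_biUnion.mpr ⟨⟨0, ht0⟩, Finset.mem_univ _, (hstep _).1⟩
      obtain ⟨m, p, q, hP, ⟨a, hpa⟩, ⟨b, hpb⟩⟩ := hc x (v ⟨0, ht0⟩)
      obtain ⟨hpi, hqi, hqE, hpstep⟩ := hP
      have hstepS : ∀ i : Fin m, (p i.castSucc ∈ S ↔ p i.succ ∈ S) := by
        intro i
        obtain ⟨h1, h2⟩ := hpstep i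
        by_cases hqc : ∃ i', q i = f i'
        · obtain ⟨i', he⟩ := hqc
          exact iff_of_true (Finset.mem_biUnion.mpr ⟨i', Finset.mem_univ _, he ▸ h1⟩)
            (Finset.mem_biUnion.mpr ⟨i', Finset.mem_univ _, he ▸ h2⟩)
        · push_neg at hqc
          have hnone : ∀ z ∈ q i, z ∉ S := by
            intro z hz hzS
            rw [hS, Finset.mem_biUnion] at hzS
            obtain ⟨i'', _, hzf⟩ := hzS
            exact hB (q i) (hqE i) hqc i'' z hz hzf
          exact iff_of_false (hnone _ h1) (hnone _ h2)
      have chain : ∀ (c : ℕ) (hcm : c < m + 1),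
          (p ⟨c, hcm⟩ ∈ S ↔ p ⟨0, Nat.succ_pos m⟩ ∈ S) := by
        intro c
        induction c with
        | zero => intro h; exact Iff.rfl
        | succ c ih =>
          intro h
          have hcm : c < m := by omega
          have h1 := hstepS ⟨c, hcm⟩
          have e1 : (Fin.castSucc ⟨c, hcm⟩ : Fin (m + 1)) = ⟨c, by omega⟩ := rfl
          have e2 : (Fin.succ ⟨c, hcm⟩ : Fin (m + 1)) = ⟨c + 1, h⟩ := rfl
          rw [e1, e2] at h1
          exact h1.symm.trans (ih (by omega))
      have hha := chain a.val a.isLt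
      have hhb := chain b.val b.isLt
      rw [Fin.eta, hpa] at hha
      rw [Fin.eta, hpb] at hhb
      exact hxS (hha.mpr (hhb.mp hv0S))
    have hsub2 : E ⊆ Finset.image f Finset.univ := by
      intro g hg
      obtain ⟨i, he⟩ := hall g hg
      exact Finset.mem_image.mpr ⟨i, Finset.mem_univ _, he.symm⟩
    have hcard : E.card ≤ t :=
      le_trans (Finset.card_le_card hsub2) (le_trans Finset.card_image_le (by simp))
    omega


theorem stmt18 (n r k t : ℕ) (hk : 5 ≤ k) (hrk : k ≤ r)
    (E : Finset (Finset (Fin n))) (hu : Uniform E r) (hc : Connected E)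
    (hf : BPFree E k)
    (ht : HasBergePath E t) (hmax : ∀ s : ℕ, HasBergePath E s → s ≤ t)
    (hcyc : ∃ (v : Fin t → Fin n) (f : Fin t → Finset (Fin n)), IsBergeCycle E t v f) :
    (E.card : ℚ) ≤ max ((t : ℚ) + 1)
      ((t : ℚ) + ((n : ℚ) - (t : ℚ)) / ((r : ℚ) - ((t / 2 : ℕ) : ℚ))) := by
  have h1 : E.card ≤ t + 1 := stmt18' n r k t hk hrk E hu hc hf ht hmax hcyc
  calc (E.card : ℚ) ≤ (t : ℚ) + 1 := by exact_mod_cast h1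
    _ ≤ _ := le_max_left _ _

end Berge
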